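/- Let X and Y be normed vector spaces, Φ : X → Y a map, u₀ ∈ X, and C* > 0, δ₀ > 0. Suppose that for every 0 < δ < δ₀ there exist sequences (u_n)_{n≥1} and (ũ_n)_{n≥1} contained in the ball B_δ(u₀) ⊆ X with ‖u_n − ũ_n‖_X → 0 as n → ∞ and limsup_{n→∞} ‖Φ(u_n) − Φ(ũ_n)‖_Y ≥ C* δ. Then Φ is not Fréchet differentiable at u₀. -/
import Mathlib

open Filter Topology

/-- Let `X` and `Y` be normed vector spaces, `Φ : X → Y` a map,
`u₀ ∈ X`, and `C* > 0`, `δ₀ > 0`.  Suppose that for every `0 < δ < δ₀` there exist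
sequences `(u_n)` and `(ũ_n)` contained in the ball `B_δ(u₀) ⊆ X` with
`‖u_n − ũ_n‖_X → 0` as `n → ∞` and `limsup_{n→∞} ‖Φ(u_n) − Φ(ũ_n)‖_Y ≥ C* δ`.
Then `Φ` is not Fréchet differentiable at `u₀`. -/
theorem not_frechet_differentiable_of_quantitative_nonuniformity
    {X Y : Type*} [NormedAddCommGroup X] [NormedSpace ℝ X]
    [NormedAddCommGroup Y] [NormedSpace ℝ Y]
    (Φ : X → Y) (u₀ : X) (Cs δ₀ : ℝ) (hCs : 0 < Cs) (hδ₀ : 0 < δ₀)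
    (h : ∀ δ, 0 < δ → δ < δ₀ →
      ∃ u v : ℕ → X,
        (∀ n, u n ∈ Metric.ball u₀ δ) ∧ (∀ n, v n ∈ Metric.ball u₀ δ) ∧
        Tendsto (fun n => ‖u n - v n‖) atTop (𝓝 0) ∧
        ENNReal.ofReal (Cs * δ) ≤
          Filter.limsup (fun n => ENNReal.ofReal ‖Φ (u n) - Φ (v n)‖) atTop) :
    ¬ DifferentiableAt ℝ Φ u₀ := by
  intro hdiff
  set f := fderiv ℝ Φ u₀ with hf
  have hlo := (hdiff.hasFDerivAt.isLittleO).def (show (0:ℝ) < Cs/4 by positivity)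
  rw [Metric.eventually_nhds_iff] at hlo
  obtain ⟨δ₁, hδ₁, hball⟩ := hlo
  set δ := min (δ₀/2) (δ₁/2) with hδdef
  have hδpos : 0 < δ := lt_min (by linarith) (by linarith)
  have hδlt : δ < δ₀ := lt_of_le_of_lt (min_le_left _ _) (by linarith)
  obtain ⟨u, v, hu, hv, htend, hlimsup⟩ := h δ hδpos hδlt
  -- pointwise bound
  have key : ∀ n, ‖Φ (u n) - Φ (v n)‖ ≤ Cs/2 * δ + ‖f‖ * ‖u n - v n‖ := by
    intro n
    have hun : dist (u n) u₀ < δ₁ :=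
      lt_of_lt_of_le (Metric.mem_ball.mp (hu n)) (le_trans (min_le_right _ _) (by linarith))
    have hvn : dist (v n) u₀ < δ₁ :=
      lt_of_lt_of_le (Metric.mem_ball.mp (hv n)) (le_trans (min_le_right _ _) (by linarith))
    have h1 := hball hun
    have h2 := hball hvn
    have hud : ‖u n - u₀‖ ≤ δ := le_of_lt (by simpa [dist_eq_norm] using Metric.mem_ball.mp (hu n))
    have hvd : ‖v n - u₀‖ ≤ δ := le_of_lt (by simpa [dist_eq_norm] using Metric.mem_ball.mp (hv n))
    have heq : Φ (u n) - Φ (v n) =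
        (Φ (u n) - Φ u₀ - f (u n - u₀)) - (Φ (v n) - Φ u₀ - f (v n - u₀)) + f (u n - v n) := by
      simp [map_sub]
      abel
    calc ‖Φ (u n) - Φ (v n)‖
        ≤ ‖Φ (u n) - Φ u₀ - f (u n - u₀)‖ + ‖Φ (v n) - Φ u₀ - f (v n - u₀)‖ + ‖f (u n - v n)‖ := by
          rw [heq]
          exact le_trans (norm_add_le _ _) (by gcongr; exact norm_sub_le _ _)
      _ ≤ Cs/4 * ‖u n - u₀‖ + Cs/4 * ‖v n - u₀‖ + ‖f‖ * ‖u n - v n‖ := by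
          gcongr ?_ + ?_ + ?_
          exact f.le_opNorm _
      _ ≤ Cs/2 * δ + ‖f‖ * ‖u n - v n‖ := by nlinarith
  -- eventually the second term is small
  have hsmall : ∀ᶠ n in atTop, ‖f‖ * ‖u n - v n‖ < Cs/4 * δ := by
    have : Tendsto (fun n => ‖f‖ * ‖u n - v n‖) atTop (𝓝 0) := by
      simpa using htend.const_mul ‖f‖
    exact this.eventually_lt_const (by positivity)
  have hev : ∀ᶠ n in atTop,
      ENNReal.ofReal ‖Φ (u n) - Φ (v n)‖ ≤ ENNReal.ofReal (3/4 * Cs * δ) := by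
    filter_upwards [hsmall] with n hn
    exact ENNReal.ofReal_le_ofReal (le_trans (key n) (by linarith))
  have hle : Filter.limsup (fun n => ENNReal.ofReal ‖Φ (u n) - Φ (v n)‖) atTop
      ≤ ENNReal.ofReal (3/4 * Cs * δ) := limsup_le_of_le (by isBoundedDefault) hev
  have : ENNReal.ofReal (Cs * δ) ≤ ENNReal.ofReal (3/4 * Cs * δ) := le_trans hlimsup hle
  rw [ENNReal.ofReal_le_ofReal_iff (by positivity)] at this
  nlinarith
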